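/- (Section 4.2, Case 3) Assume S is a NO instance of k-OV: every k vectors v_1,…,v_k ∈ S (repetitions allowed) have a common coordinate x ∈ [d] with v_1[x] = ⋯ = v_k[x] = 1. Then for all vertices α, β ∈ L_3 ∪ ⋯ ∪ L_{k-1} ∪ L'_3 ∪ ⋯ ∪ L'_{k-1}, we have d(α,β) ≤ k. -/

import Mathlib

namespace DiamLB

/-! ## Generic directed-graph notions -/

/-- There is a directed walk of length `n` from `a` to `b`. -/
def HasWalkLen {V : Type*} (Adj : V → V → Prop) : ℕ → V → V → Prop
  | 0, a, b => a = b
  | n + 1, a, b => ∃ c, Adj a c ∧ HasWalkLen Adj n c b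

/-- `P 0, P 1, …, P n` is a directed walk. -/
def IsWalk {V : Type*} (Adj : V → V → Prop) (P : ℕ → V) (n : ℕ) : Prop :=
  ∀ t, t < n → Adj (P t) (P (t + 1))

/-- The shortest-path distance from `a` to `b` is at most `m`. -/
def DistLE {V : Type*} (Adj : V → V → Prop) (a b : V) (m : ℕ) : Prop :=
  ∃ n ≤ m, HasWalkLen Adj n a b

/-! ## The construction (Section 3, `k ≥ 5`) -/

/-- Boolean vectors of length `d`, i.e. elements of `{0,1}^d`. -/
abbrev Vec (d : ℕ) := Fin d → Bool

/-- The all-ones vector. -/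
def ones (d : ℕ) : Vec d := fun _ => true

/-- Tags naming the layers of the construction. -/
inductive Tag : Type
  | L (i : ℕ)
  | L' (i : ℕ)
  | A (i : ℕ)
  | B (i : ℕ)

/-- Potential vertices of the construction: a tagged partial tuple of vectors
(position `j : Fin k` holding the vector with 1-based index `j+1`) together with a
coordinate array `x` (1-based entry `x_ℓ` at position `ℓ-1 : Fin (k-1)`), plus the two
special vertices `uu` (the vertex `u`) and `vv` (the vertex `v`).  Vertices carrying no
coordinate array in the paper are modelled with the all-zero coordinate array. -/
inductive Vert (k d : ℕ) : Type
  | node (tag : Tag) (p : Fin k → Option (Vec d)) (x : Fin (k - 1) → Fin d) : Vert k d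
  | uu : Vert k d
  | vv : Vert k d

/-- The positions (0-based) satisfying `F` are filled by vectors of `S`, and the other
positions are empty. -/
def FillsS (k d : ℕ) (S : Finset (Vec d)) (F : ℕ → Prop) (p : Fin k → Option (Vec d)) :
    Prop :=
  ∀ j : Fin k, (F (j : ℕ) → ∃ a ∈ S, p j = some a) ∧ (¬ F (j : ℕ) → p j = none)

/-- The dummy (all-zero) coordinate array, used for vertices that carry no coordinate
array in the paper. -/
def ZeroX (k d : ℕ) (x : Fin (k - 1) → Fin d) : Prop :=
  ∀ ℓ, (x ℓ : ℕ) = 0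

/-- The compatibility condition between the vector tuple and the coordinate array of a
vertex of `L_i` (Table 1): for `1 ≤ j ≤ k-i` (the `a_j`), `a_j[x_ℓ] = 1` for all
`1 ≤ ℓ ≤ k-j`, and for `k-i+3 ≤ j ≤ k` (the `b_j`), `b_j[x_ℓ] = 1` for all
`k-j+1 ≤ ℓ ≤ k-1`.  (Everything is 0-based here: position `j` holds the vector with
1-based index `j+1`, and `x ℓ` is the 1-based coordinate `x_{ℓ+1}`.) -/
def BitCond (k d : ℕ) (i : ℕ) (p : Fin k → Option (Vec d)) (x : Fin (k - 1) → Fin d) :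
    Prop :=
  (∀ j : Fin k, (j : ℕ) < k - i → ∀ w, p j = some w →
    ∀ ℓ : Fin (k - 1), (ℓ : ℕ) < k - ((j : ℕ) + 1) → w (x ℓ) = true) ∧
  (∀ j : Fin k, k - i + 2 ≤ (j : ℕ) → ∀ w, p j = some w →
    ∀ ℓ : Fin (k - 1), k - ((j : ℕ) + 1) ≤ (ℓ : ℕ) → w (x ℓ) = true)

/-- The layer `L_i`, for `i = 1, …, k+1`. -/
def setL (k d : ℕ) (S : Finset (Vec d)) (i : ℕ) : Set (Vert k d) :=
  { w | ∃ p x, w = Vert.node (Tag.L i) p x ∧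
      ((i = 1 ∧ FillsS k d S (fun j => j < k - 1) p ∧ ZeroX k d x) ∨
       (i = k + 1 ∧ FillsS k d S (fun j => 1 ≤ j) p ∧ ZeroX k d x) ∨
       (2 ≤ i ∧ i ≤ k ∧ FillsS k d S (fun j => j < k - i ∨ k - i + 2 ≤ j) p ∧
         BitCond k d i p x)) }

/-- The layer `L'_i`, for `i = 3, …, k-1`: same vector tuples as `L_i` but with an
arbitrary coordinate array. -/
def setL' (k d : ℕ) (S : Finset (Vec d)) (i : ℕ) : Set (Vert k d) :=
  { w | ∃ p x, w = Vert.node (Tag.L' i) p x ∧ 3 ≤ i ∧ i ≤ k - 1 ∧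
      FillsS k d S (fun j => j < k - i ∨ k - i + 2 ≤ j) p }

/-- The set `A_i`, for `i = 4, …, k-1`: tuples `(a_1, …, a_{k-i})`. -/
def setA (k d : ℕ) (S : Finset (Vec d)) (i : ℕ) : Set (Vert k d) :=
  { w | ∃ p x, w = Vert.node (Tag.A i) p x ∧ 4 ≤ i ∧ i ≤ k - 1 ∧
      FillsS k d S (fun j => j < k - i) p ∧ ZeroX k d x }

/-- The set `B_i`, for `i = 3, …, k-2`: tuples `(b_{k-i+3}, …, b_k)`. -/
def setB (k d : ℕ) (S : Finset (Vec d)) (i : ℕ) : Set (Vert k d) :=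
  { w | ∃ p x, w = Vert.node (Tag.B i) p x ∧ 3 ≤ i ∧ i ≤ k - 2 ∧
      FillsS k d S (fun j => k - i + 2 ≤ j) p ∧ ZeroX k d x }

/-- `L = ∪_i L_i`. -/
def setLall (k d : ℕ) (S : Finset (Vec d)) : Set (Vert k d) := ⋃ i, setL k d S i

/-- `L' = ∪_i L'_i`. -/
def setL'all (k d : ℕ) (S : Finset (Vec d)) : Set (Vert k d) := ⋃ i, setL' k d S i

/-- `A = ∪_i A_i`. -/
def setAall (k d : ℕ) (S : Finset (Vec d)) : Set (Vert k d) := ⋃ i, setA k d S i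

/-- `B = ∪_i B_i`. -/
def setBall (k d : ℕ) (S : Finset (Vec d)) : Set (Vert k d) := ⋃ i, setB k d S i

/-- Level `i` is `L_i ∪ L'_i ∪ A_i ∪ B_i`. -/
def level (k d : ℕ) (S : Finset (Vec d)) (i : ℕ) : Set (Vert k d) :=
  setL k d S i ∪ setL' k d S i ∪ setA k d S i ∪ setB k d S i

/-- The vertex set of the graph `G`. -/
def VertexSet (k d : ℕ) (S : Finset (Vec d)) : Set (Vert k d) :=
  setLall k d S ∪ setL'all k d S ∪ setAall k d S ∪ setBall k d S ∪ {Vert.uu, Vert.vv}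

/-! ### Edges -/

/-- One orientation of the (undirected) swap edges.  Between `L_i` and `L_{i+1}`
(`2 ≤ i ≤ k-1`) the vector `a_{k-i}` (0-based position `k-i-1`) is exchanged for the
vector `b_{k-i+2}` (0-based position `k-i+1`), keeping the coordinate array; between
`L_1` and `L_2` the vector `a_{k-1}` is exchanged for a coordinate array; between
`L_{k+1}` and `L_k` the vector `b_2` is exchanged for a coordinate array. -/
def SwapE (k d : ℕ) (S : Finset (Vec d)) (α β : Vert k d) : Prop :=
  (∃ i p x p' x', 2 ≤ i ∧ i ≤ k - 1 ∧
      α = Vert.node (Tag.L i) p x ∧ β = Vert.node (Tag.L (i + 1)) p' x' ∧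
      α ∈ setL k d S i ∧ β ∈ setL k d S (i + 1) ∧ x' = x ∧
      (∀ j : Fin k, (j : ℕ) ≠ k - i - 1 → (j : ℕ) ≠ k - i + 1 → p' j = p j)) ∨
  (∃ p x p' x',
      α = Vert.node (Tag.L 1) p x ∧ β = Vert.node (Tag.L 2) p' x' ∧
      α ∈ setL k d S 1 ∧ β ∈ setL k d S 2 ∧
      (∀ j : Fin k, (j : ℕ) ≠ k - 2 → p' j = p j)) ∨
  (∃ p x p' x',
      α = Vert.node (Tag.L (k + 1)) p x ∧ β = Vert.node (Tag.L k) p' x' ∧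
      α ∈ setL k d S (k + 1) ∧ β ∈ setL k d S k ∧
      (∀ j : Fin k, (j : ℕ) ≠ 1 → p' j = p j))

/-- One orientation of the (undirected) vector-change edges between `L_i` and `L'_i`
(`3 ≤ i ≤ k-1`): same coordinate array, same vectors except possibly one of `a_{k-i}`
(position `k-i-1`) or `b_{k-i+3}` (position `k-i+2`). -/
def VecE (k d : ℕ) (S : Finset (Vec d)) (α β : Vert k d) : Prop :=
  ∃ i p x p' x', 3 ≤ i ∧ i ≤ k - 1 ∧
    α = Vert.node (Tag.L i) p x ∧ β = Vert.node (Tag.L' i) p' x' ∧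
    α ∈ setL k d S i ∧ β ∈ setL' k d S i ∧ x' = x ∧
    ((∀ j : Fin k, (j : ℕ) ≠ k - i - 1 → p' j = p j) ∨
     (∀ j : Fin k, (j : ℕ) ≠ k - i + 2 → p' j = p j))

/-- The (undirected, symmetric as stated) coordinate-change edges: two distinct
vertices with the same vector tuple, within each `L'_i`, between `L'_i` and `L_i`,
within `L_2` and within `L_k`. -/
def CoordE (k d : ℕ) (S : Finset (Vec d)) (α β : Vert k d) : Prop :=
  ∃ t t' p x x', α = Vert.node t p x ∧ β = Vert.node t' p x' ∧ α ≠ β ∧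
    ((∃ i, α ∈ setL' k d S i ∧ β ∈ setL' k d S i) ∨
     (∃ i, α ∈ setL' k d S i ∧ β ∈ setL k d S i) ∨
     (∃ i, α ∈ setL k d S i ∧ β ∈ setL' k d S i) ∨
     (α ∈ setL k d S 2 ∧ β ∈ setL k d S 2) ∨
     (α ∈ setL k d S k ∧ β ∈ setL k d S k))

/-- The directed `a`-type back edges: from `L_i ∪ L'_i` to the matching prefix in `A_i`;
from `A_i` to every vertex of `L'_4` with the matching prefix; and from `A_{k-1}`
to every vertex of `A_i` with the same first vector `a_1`. -/
def ABack (k d : ℕ) (S : Finset (Vec d)) (α β : Vert k d) : Prop :=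
  (∃ i t p x p' x', (α ∈ setL k d S i ∨ α ∈ setL' k d S i) ∧ β ∈ setA k d S i ∧
      α = Vert.node t p x ∧ β = Vert.node (Tag.A i) p' x' ∧
      (∀ j : Fin k, (j : ℕ) < k - i → p' j = p j)) ∨
  (∃ i p x p' x', α ∈ setA k d S i ∧ β ∈ setL' k d S 4 ∧
      α = Vert.node (Tag.A i) p x ∧ β = Vert.node (Tag.L' 4) p' x' ∧
      (∀ j : Fin k, (j : ℕ) < k - i → p' j = p j)) ∨
  (∃ i p x p' x', α ∈ setA k d S (k - 1) ∧ β ∈ setA k d S i ∧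
      α = Vert.node (Tag.A (k - 1)) p x ∧ β = Vert.node (Tag.A i) p' x' ∧
      (∀ j : Fin k, (j : ℕ) = 0 → p' j = p j))

/-- The directed `b`-type back edges: from `B_i` to every vertex of `L_i ∪ L'_i` with
the matching suffix; from every vertex of `L'_{k-2}` to the vertex of `B_i` with the
matching suffix; and from `B_i` to the vertex of `B_3` with the same last vector. -/
def BBack (k d : ℕ) (S : Finset (Vec d)) (α β : Vert k d) : Prop :=
  (∃ i t p x p' x', α ∈ setB k d S i ∧ (β ∈ setL k d S i ∨ β ∈ setL' k d S i) ∧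
      α = Vert.node (Tag.B i) p x ∧ β = Vert.node t p' x' ∧
      (∀ j : Fin k, k - i + 2 ≤ (j : ℕ) → p j = p' j)) ∨
  (∃ i p x p' x', α ∈ setL' k d S (k - 2) ∧ β ∈ setB k d S i ∧
      α = Vert.node (Tag.L' (k - 2)) p x ∧ β = Vert.node (Tag.B i) p' x' ∧
      (∀ j : Fin k, k - i + 2 ≤ (j : ℕ) → p' j = p j)) ∨
  (∃ i p x p' x', α ∈ setB k d S i ∧ β ∈ setB k d S 3 ∧
      α = Vert.node (Tag.B i) p x ∧ β = Vert.node (Tag.B 3) p' x' ∧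
      (∀ j : Fin k, (j : ℕ) = k - 1 → p' j = p j))

/-- The directed `ba`-type back edges: from every vertex of `B_i` to every vertex of
`A_i`, for `4 ≤ i ≤ k-2`. -/
def BABack (k d : ℕ) (S : Finset (Vec d)) (α β : Vert k d) : Prop :=
  ∃ i, 4 ≤ i ∧ i ≤ k - 2 ∧ α ∈ setB k d S i ∧ β ∈ setA k d S i

/-- The directed fixed edges: `L'_{k-2} → v`, `v → L_1 ∪ L_2`, `L_k ∪ L_{k+1} → u`,
and `u → L'_4`. -/
def FixedE (k d : ℕ) (S : Finset (Vec d)) (α β : Vert k d) : Prop :=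
  (α ∈ setL' k d S (k - 2) ∧ β = Vert.vv) ∨
  (α = Vert.vv ∧ (β ∈ setL k d S 1 ∨ β ∈ setL k d S 2)) ∨
  ((α ∈ setL k d S k ∨ α ∈ setL k d S (k + 1)) ∧ β = Vert.uu) ∨
  (α = Vert.uu ∧ β ∈ setL' k d S 4)

/-- The adjacency relation of the graph `G` (undirected edges appear in both
directions). -/
def Adj (k d : ℕ) (S : Finset (Vec d)) (α β : Vert k d) : Prop :=
  SwapE k d S α β ∨ SwapE k d S β α ∨ VecE k d S α β ∨ VecE k d S β α ∨
  CoordE k d S α β ∨ ABack k d S α β ∨ BBack k d S α β ∨ BABack k d S α β ∨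
  FixedE k d S α β

/-! ### Loops and covers (Section 5) -/

/-- `t` is the first time at which the walk `P` (of length `n`) visits `L_i`. -/
def FirstVisit (k d : ℕ) (S : Finset (Vec d)) (P : ℕ → Vert k d) (n i t : ℕ) : Prop :=
  t ≤ n ∧ P t ∈ setL k d S i ∧ ∀ s, s < t → P s ∉ setL k d S i

/-- `t` is the last time at which the walk `P` (of length `n`) visits `L_i`. -/
def LastVisit (k d : ℕ) (S : Finset (Vec d)) (P : ℕ → Vert k d) (n i t : ℕ) : Prop :=
  t ≤ n ∧ P t ∈ setL k d S i ∧ ∀ s, t < s → s ≤ n → P s ∉ setL k d S i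

/-- The layer `L_i` is in a loop: the walk `P` visits `L_i` at least twice. -/
def InLoop (k d : ℕ) (S : Finset (Vec d)) (P : ℕ → Vert k d) (n i : ℕ) : Prop :=
  ∃ t1 t2, t1 < t2 ∧ t2 ≤ n ∧ P t1 ∈ setL k d S i ∧ P t2 ∈ setL k d S i

/-- The walk `P` visits `A`. -/
def VisitsA (k d : ℕ) (S : Finset (Vec d)) (P : ℕ → Vert k d) (n : ℕ) : Prop :=
  ∃ t ≤ n, P t ∈ setAall k d S

/-- The walk `P` visits `B`. -/
def VisitsB (k d : ℕ) (S : Finset (Vec d)) (P : ℕ → Vert k d) (n : ℕ) : Prop :=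
  ∃ t ≤ n, P t ∈ setBall k d S

/-- The layer `L_i` covers the layer `L_m` (with respect to the walk `P` of length `n`):
for `3 ≤ i ≤ k-1`, `L_i` covers `L_{i-1}` if `L_{i-1}` is not in a loop, `L_i` is in a
loop, and the first and last vertices of `P` in `L_i` differ in the vector `b_{k-i+3}`
(0-based position `k-i+2`) and in the coordinate array; symmetrically `L_i` covers
`L_{i+1}` using the vector `a_{k-i}` (0-based position `k-i-1`).  Additionally `L_4`
covers both `L_3` and `L_2` if `P` visits `A`, and `L_{k-2}` covers both `L_{k-1}` and
`L_k` if `P` visits `B`. -/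
def Covers (k d : ℕ) (S : Finset (Vec d)) (P : ℕ → Vert k d) (n : ℕ) (i m : ℕ) : Prop :=
  (3 ≤ i ∧ i ≤ k - 1 ∧ m + 1 = i ∧ ¬ InLoop k d S P n m ∧ InLoop k d S P n i ∧
    ∃ t1 t2 p1 x1 p2 x2, FirstVisit k d S P n i t1 ∧ LastVisit k d S P n i t2 ∧
      P t1 = Vert.node (Tag.L i) p1 x1 ∧ P t2 = Vert.node (Tag.L i) p2 x2 ∧
      (∀ j : Fin k, (j : ℕ) = k - i + 2 → p1 j ≠ p2 j) ∧ x1 ≠ x2) ∨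
  (3 ≤ i ∧ i ≤ k - 1 ∧ m = i + 1 ∧ ¬ InLoop k d S P n m ∧ InLoop k d S P n i ∧
    ∃ t1 t2 p1 x1 p2 x2, FirstVisit k d S P n i t1 ∧ LastVisit k d S P n i t2 ∧
      P t1 = Vert.node (Tag.L i) p1 x1 ∧ P t2 = Vert.node (Tag.L i) p2 x2 ∧
      (∀ j : Fin k, (j : ℕ) = k - i - 1 → p1 j ≠ p2 j) ∧ x1 ≠ x2) ∨
  (i = 4 ∧ (m = 3 ∨ m = 2) ∧ VisitsA k d S P n) ∨
  (i = k - 2 ∧ (m = k - 1 ∨ m = k) ∧ VisitsB k d S P n)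


/-! ## Auxiliary machinery for the proof of Statement 7 -/

section WalkAux

variable {V' : Type*} {R : V' → V' → Prop}

lemma hwl_single {a b : V'} (h : R a b) : HasWalkLen R 1 a b := ⟨b, h, rfl⟩

lemma distLE_intro {a b : V'} {n m : ℕ} (w : HasWalkLen R n a b) (h : n ≤ m) :
    DistLE R a b m := ⟨n, h, w⟩

lemma distLE_elim {a b : V'} {m : ℕ} (h : DistLE R a b m) :
    ∃ n, n ≤ m ∧ HasWalkLen R n a b := h

lemma hwl_trans : ∀ {m : ℕ} {a b : V'}, HasWalkLen R m a b →
    ∀ {n : ℕ} {c : V'}, HasWalkLen R n b c → HasWalkLen R (m + n) a c := by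
  intro m
  induction m with
  | zero =>
    intro a b h n c h2
    have hab : a = b := h
    subst hab
    simpa [Nat.zero_add] using h2
  | succ m ih =>
    intro a b h n c h2
    obtain ⟨e, hae, hw⟩ := h
    rw [Nat.succ_add]
    exact ⟨e, hae, ih hw h2⟩

lemma hwl_cons {a b c : V'} {n : ℕ} (h : R a b) (hw : HasWalkLen R n b c) :
    HasWalkLen R (n + 1) a c := by
  rw [Nat.add_comm]
  exact hwl_trans (hwl_single h) hw

end WalkAux

section AdjAux

variable {k d : ℕ} {S : Finset (Vec d)} {a b : Vert k d}

lemma adj_swap (h : SwapE k d S a b) : Adj k d S a b := Or.inl h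
lemma adj_swap' (h : SwapE k d S b a) : Adj k d S a b := Or.inr (Or.inl h)
lemma adj_vec (h : VecE k d S a b) : Adj k d S a b := Or.inr (Or.inr (Or.inl h))
lemma adj_vec' (h : VecE k d S b a) : Adj k d S a b := Or.inr (Or.inr (Or.inr (Or.inl h)))
lemma adj_coord (h : CoordE k d S a b) : Adj k d S a b :=
  Or.inr (Or.inr (Or.inr (Or.inr (Or.inl h))))
lemma adj_aback (h : ABack k d S a b) : Adj k d S a b :=
  Or.inr (Or.inr (Or.inr (Or.inr (Or.inr (Or.inl h)))))
lemma adj_bback (h : BBack k d S a b) : Adj k d S a b :=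
  Or.inr (Or.inr (Or.inr (Or.inr (Or.inr (Or.inr (Or.inl h))))))

end AdjAux

section FillsAux

variable {k d : ℕ} {S : Finset (Vec d)} {F : ℕ → Prop} {p : Fin k → Option (Vec d)}

lemma FillsS.some_getD (hf : FillsS k d S F p) {j : Fin k} (hF : F (j : ℕ)) :
    p j = some ((p j).getD (ones d)) := by
  obtain ⟨a, _, ha⟩ := (hf j).1 hF
  rw [ha]; rfl

lemma FillsS.getD_mem (hone : ones d ∈ S) (hf : FillsS k d S F p) (j : Fin k) :
    (p j).getD (ones d) ∈ S := by
  by_cases hF : F (j : ℕ)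
  · obtain ⟨a, haS, ha⟩ := (hf j).1 hF
    rw [ha]; exact haS
  · rw [(hf j).2 hF]; exact hone

lemma FillsS.none (hf : FillsS k d S F p) {j : Fin k} (hF : ¬ F (j : ℕ)) : p j = none :=
  (hf j).2 hF

lemma FillsS.mem_of_some (hf : FillsS k d S F p) {j : Fin k} {w : Vec d}
    (h : p j = some w) : w ∈ S := by
  by_cases hF : F (j : ℕ)
  · obtain ⟨a, haS, ha⟩ := (hf j).1 hF
    rw [ha] at h; cases h; exact haS
  · rw [(hf j).2 hF] at h; cases h

end FillsAux

section PlanAux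

variable {k d : ℕ} {S : Finset (Vec d)}

/-- The vector tuple of the "plan" walk at level `m` : positions `< k-m` carry `A`,
positions `≥ k-m+2` carry `B`. -/
def planP {k d : ℕ} (A B : Fin k → Vec d) (m : ℕ) : Fin k → Option (Vec d) :=
  fun j => if (j : ℕ) < k - m then some (A j)
           else if k - m + 2 ≤ (j : ℕ) then some (B j) else none

variable {A B : Fin k → Vec d} {x : Fin (k - 1) → Fin d}

lemma bitcond_plan
    (hxA : ∀ (ℓ : Fin (k - 1)) (j : Fin k), (j : ℕ) + (ℓ : ℕ) + 1 < k → A j (x ℓ) = true)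
    (hxB : ∀ (ℓ : Fin (k - 1)) (j : Fin k), k ≤ (j : ℕ) + (ℓ : ℕ) + 1 → B j (x ℓ) = true)
    (i : ℕ) (p : Fin k → Option (Vec d))
    (hp : ∀ (j : Fin k) (w : Vec d), p j = some w →
      ((j : ℕ) < k - i ∧ w = A j) ∨ (k - i + 2 ≤ (j : ℕ) ∧ w = B j)) :
    BitCond k d i p x := by
  constructor
  · intro j hj w hw ℓ hℓ
    rcases hp j w hw with ⟨_, rfl⟩ | ⟨h2, _⟩
    · exact hxA ℓ j (by omega)
    · omega
  · intro j hj w hw ℓ hℓ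
    rcases hp j w hw with ⟨h1, _⟩ | ⟨_, rfl⟩
    · omega
    · exact hxB ℓ j (by omega)

lemma planP_fills (hAS : ∀ j, A j ∈ S) (hBS : ∀ j, B j ∈ S) (m : ℕ) :
    FillsS k d S (fun j => j < k - m ∨ k - m + 2 ≤ j) (planP A B m) := by
  intro j
  constructor
  · intro hF
    by_cases h1 : (j : ℕ) < k - m
    · exact ⟨A j, hAS j, by simp [planP, h1]⟩
    · have h2 : k - m + 2 ≤ (j : ℕ) := by omega
      exact ⟨B j, hBS j, by simp [planP, h1, h2]⟩
  · intro hF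
    have h1 : ¬ (j : ℕ) < k - m := fun h => hF (Or.inl h)
    have h2 : ¬ (k - m + 2 ≤ (j : ℕ)) := fun h => hF (Or.inr h)
    simp [planP, h1, h2]

lemma planP_bit
    (hxA : ∀ (ℓ : Fin (k - 1)) (j : Fin k), (j : ℕ) + (ℓ : ℕ) + 1 < k → A j (x ℓ) = true)
    (hxB : ∀ (ℓ : Fin (k - 1)) (j : Fin k), k ≤ (j : ℕ) + (ℓ : ℕ) + 1 → B j (x ℓ) = true)
    (m : ℕ) : BitCond k d m (planP A B m) x := by
  refine bitcond_plan hxA hxB m _ ?_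
  intro j w h
  unfold planP at h
  split_ifs at h with h1 h2
  · exact Or.inl ⟨h1, (Option.some.inj h).symm⟩
  · exact Or.inr ⟨h2, (Option.some.inj h).symm⟩

lemma memVL (hAS : ∀ j, A j ∈ S) (hBS : ∀ j, B j ∈ S)
    (hxA : ∀ (ℓ : Fin (k - 1)) (j : Fin k), (j : ℕ) + (ℓ : ℕ) + 1 < k → A j (x ℓ) = true)
    (hxB : ∀ (ℓ : Fin (k - 1)) (j : Fin k), k ≤ (j : ℕ) + (ℓ : ℕ) + 1 → B j (x ℓ) = true)
    (m : ℕ) (h2 : 2 ≤ m) (hmk : m ≤ k) :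
    Vert.node (Tag.L m) (planP A B m) x ∈ setL k d S m :=
  ⟨planP A B m, x, rfl, Or.inr (Or.inr ⟨h2, hmk, planP_fills hAS hBS m,
    planP_bit hxA hxB m⟩)⟩

lemma memVL' (hAS : ∀ j, A j ∈ S) (hBS : ∀ j, B j ∈ S)
    (y : Fin (k - 1) → Fin d) (m : ℕ) (h3 : 3 ≤ m) (hmk : m ≤ k - 1) :
    Vert.node (Tag.L' m) (planP A B m) y ∈ setL' k d S m :=
  ⟨planP A B m, y, rfl, h3, hmk, planP_fills hAS hBS m⟩

lemma planP_succ_eq (hk : 5 ≤ k) {m : ℕ} (h2 : 2 ≤ m) (hmk : m ≤ k - 1)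
    (j : Fin k) (hj1 : (j : ℕ) ≠ k - m - 1) (hj2 : (j : ℕ) ≠ k - m + 1) :
    planP A B (m + 1) j = planP A B m j := by
  unfold planP
  split_ifs <;> first | rfl | omega

lemma stepUp (hk : 5 ≤ k) (hAS : ∀ j, A j ∈ S) (hBS : ∀ j, B j ∈ S)
    (hxA : ∀ (ℓ : Fin (k - 1)) (j : Fin k), (j : ℕ) + (ℓ : ℕ) + 1 < k → A j (x ℓ) = true)
    (hxB : ∀ (ℓ : Fin (k - 1)) (j : Fin k), k ≤ (j : ℕ) + (ℓ : ℕ) + 1 → B j (x ℓ) = true)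
    (m : ℕ) (h2 : 2 ≤ m) (hmk : m ≤ k - 1) :
    Adj k d S (Vert.node (Tag.L m) (planP A B m) x)
      (Vert.node (Tag.L (m + 1)) (planP A B (m + 1)) x) := by
  refine adj_swap (Or.inl ⟨m, planP A B m, x, planP A B (m + 1), x, h2, hmk, rfl, rfl,
    memVL hAS hBS hxA hxB m h2 (by omega),
    memVL hAS hBS hxA hxB (m + 1) (by omega) (by omega), rfl, ?_⟩)
  intro j hj1 hj2
  exact planP_succ_eq hk h2 hmk j hj1 hj2

lemma climb (hk : 5 ≤ k) (hAS : ∀ j, A j ∈ S) (hBS : ∀ j, B j ∈ S)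
    (hxA : ∀ (ℓ : Fin (k - 1)) (j : Fin k), (j : ℕ) + (ℓ : ℕ) + 1 < k → A j (x ℓ) = true)
    (hxB : ∀ (ℓ : Fin (k - 1)) (j : Fin k), k ≤ (j : ℕ) + (ℓ : ℕ) + 1 → B j (x ℓ) = true) :
    ∀ (n s : ℕ), 2 ≤ s → s + n ≤ k →
      HasWalkLen (Adj k d S) n (Vert.node (Tag.L s) (planP A B s) x)
        (Vert.node (Tag.L (s + n)) (planP A B (s + n)) x) := by
  intro n
  induction n with
  | zero => intro s _ _; rfl
  | succ n ih =>
    intro s h2 hsn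
    refine ⟨Vert.node (Tag.L (s + 1)) (planP A B (s + 1)) x, ?_, ?_⟩
    · exact stepUp hk hAS hBS hxA hxB s h2 (by omega)
    · have h := ih (s + 1) (by omega) (by omega)
      have he : s + 1 + n = s + (n + 1) := by omega
      rwa [he] at h

end PlanAux

section ElimAux

variable {k d : ℕ} {S : Finset (Vec d)} {α : Vert k d}

lemma setL_elim (hk : 5 ≤ k) {i : ℕ} (h3 : 3 ≤ i) (hik : i ≤ k - 1)
    (h : α ∈ setL k d S i) :
    ∃ p x, α = Vert.node (Tag.L i) p x ∧
      FillsS k d S (fun j => j < k - i ∨ k - i + 2 ≤ j) p ∧ BitCond k d i p x := by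
  obtain ⟨p, x, rfl, h⟩ := h
  rcases h with ⟨h1, _⟩ | ⟨h1, _⟩ | ⟨_, _, hf, hb⟩
  · omega
  · omega
  · exact ⟨p, x, rfl, hf, hb⟩

lemma setL'_elim {i : ℕ} (h : α ∈ setL' k d S i) :
    ∃ p x, α = Vert.node (Tag.L' i) p x ∧
      FillsS k d S (fun j => j < k - i ∨ k - i + 2 ≤ j) p := by
  obtain ⟨p, x, rfl, _, _, hf⟩ := h
  exact ⟨p, x, rfl, hf⟩

end ElimAux

/-- **Section 4.2, Case 3.**  Assume `S` is a NO instance of `k`-OV: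
every `k` vectors of `S` (repetitions allowed) have a common coordinate at which they
all equal `1`.  Then for all vertices `α, β ∈ L_3 ∪ ⋯ ∪ L_{k-1} ∪ L'_3 ∪ ⋯ ∪ L'_{k-1}`,
we have `d(α,β) ≤ k`. -/
theorem case3_no_instance (k d : ℕ) (hk : 5 ≤ k) (hd : 1 ≤ d)
    (S : Finset (Vec d)) (hone : ones d ∈ S)
    (hno : ∀ f : Fin k → Vec d, (∀ j, f j ∈ S) → ∃ x : Fin d, ∀ j, f j x = true)
    (α β : Vert k d)
    (hα : ∃ i, 3 ≤ i ∧ i ≤ k - 1 ∧ (α ∈ setL k d S i ∨ α ∈ setL' k d S i))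
    (hβ : ∃ i, 3 ≤ i ∧ i ≤ k - 1 ∧ (β ∈ setL k d S i ∨ β ∈ setL' k d S i)) :
    DistLE (Adj k d S) α β k := by
  classical
  obtain ⟨i, hi3, hik, hα⟩ := hα
  obtain ⟨i', hj3, hjk, hβ⟩ := hβ
  -- extract the data of `α`
  obtain ⟨pα, xα, hαd, hαfill⟩ :
      ∃ p x, ((α = Vert.node (Tag.L i) p x ∧ α ∈ setL k d S i ∧ BitCond k d i p x) ∨
              (α = Vert.node (Tag.L' i) p x ∧ α ∈ setL' k d S i)) ∧
        FillsS k d S (fun j => j < k - i ∨ k - i + 2 ≤ j) p := by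
    rcases hα with h | h
    · obtain ⟨p, x, h1, hf, hb⟩ := setL_elim hk hi3 hik h
      exact ⟨p, x, Or.inl ⟨h1, h, hb⟩, hf⟩
    · obtain ⟨p, x, h1, hf⟩ := setL'_elim h
      exact ⟨p, x, Or.inr ⟨h1, h⟩, hf⟩
  -- extract the data of `β`
  obtain ⟨pβ, xβ, hβd, hβfill⟩ :
      ∃ p x, ((β = Vert.node (Tag.L i') p x ∧ β ∈ setL k d S i') ∨
              (β = Vert.node (Tag.L' i') p x ∧ β ∈ setL' k d S i')) ∧
        FillsS k d S (fun j => j < k - i' ∨ k - i' + 2 ≤ j) p := by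
    rcases hβ with h | h
    · obtain ⟨p, x, h1, hf, _⟩ := setL_elim hk hj3 hjk h
      exact ⟨p, x, Or.inl ⟨h1, h⟩, hf⟩
    · obtain ⟨p, x, h1, hf⟩ := setL'_elim h
      exact ⟨p, x, Or.inr ⟨h1, h⟩, hf⟩
  -- the plan vectors
  obtain ⟨A, hAdef⟩ : ∃ f : Fin k → Vec d, f = fun j : Fin k =>
      if (j : ℕ) < k - i then (pα j).getD (ones d) else ones d := ⟨_, rfl⟩
  obtain ⟨B, hBdef⟩ : ∃ f : Fin k → Vec d, f = fun j : Fin k =>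
      if k - i' + 2 ≤ (j : ℕ) then (pβ j).getD (ones d) else ones d := ⟨_, rfl⟩
  have hAS : ∀ j, A j ∈ S := by
    intro j
    rw [hAdef]
    dsimp only
    split_ifs
    · exact hαfill.getD_mem hone j
    · exact hone
  have hBS : ∀ j, B j ∈ S := by
    intro j
    rw [hBdef]
    dsimp only
    split_ifs
    · exact hβfill.getD_mem hone j
    · exact hone
  -- the plan coordinate array
  obtain ⟨x', hx'⟩ : ∃ x'' : Fin (k - 1) → Fin d, ∀ (ℓ : Fin (k - 1)) (j : Fin k),
      ((j : ℕ) + (ℓ : ℕ) + 1 < k → A j (x'' ℓ) = true) ∧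
      (k ≤ (j : ℕ) + (ℓ : ℕ) + 1 → B j (x'' ℓ) = true) := by
    have h := fun ℓ : Fin (k - 1) =>
      hno (fun j => if (j : ℕ) + (ℓ : ℕ) + 1 < k then A j else B j)
        (fun j => by split_ifs; exacts [hAS j, hBS j])
    choose xx hxx using h
    refine ⟨xx, fun ℓ j => ⟨fun h1 => ?_, fun h2 => ?_⟩⟩
    · have := hxx ℓ j; rwa [if_pos h1] at this
    · have := hxx ℓ j; rwa [if_neg (by omega)] at this
  have hxA : ∀ (ℓ : Fin (k - 1)) (j : Fin k),
      (j : ℕ) + (ℓ : ℕ) + 1 < k → A j (x' ℓ) = true := fun ℓ j h => (hx' ℓ j).1 h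
  have hxB : ∀ (ℓ : Fin (k - 1)) (j : Fin k),
      k ≤ (j : ℕ) + (ℓ : ℕ) + 1 → B j (x' ℓ) = true := fun ℓ j h => (hx' ℓ j).2 h
  -- plan agrees with α on the `a`-part and with β on the `b`-part
  have hplanA : ∀ j : Fin k, (j : ℕ) < k - i → some (A j) = pα j := by
    intro j hj
    rw [hAdef]
    dsimp only
    rw [if_pos hj]
    exact (hαfill.some_getD (Or.inl hj)).symm
  have hplanB : ∀ j : Fin k, k - i' + 2 ≤ (j : ℕ) → some (B j) = pβ j := by
    intro j hj
    rw [hBdef]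
    dsimp only
    rw [if_pos hj]
    exact (hβfill.some_getD (Or.inr hj)).symm
  -- the zero coordinate array
  obtain ⟨x0, hx0def⟩ : ∃ f : Fin (k - 1) → Fin d, f = fun _ => ⟨0, hd⟩ := ⟨_, rfl⟩
  have hx0 : ZeroX k d x0 := by intro ℓ; rw [hx0def]
  -- the tail of the walk in case `i' ≤ k-2` (via `B_{i'}`)
  have tailB : i' ≤ k - 2 →
      HasWalkLen (Adj k d S) 3 (Vert.node (Tag.L (k - 2)) (planP A B (k - 2)) x') β := by
    intro hi'
    obtain ⟨pB, hpBdef⟩ : ∃ f : Fin k → Option (Vec d), f = fun j : Fin k =>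
      if k - i' + 2 ≤ (j : ℕ) then pβ j else none := ⟨_, rfl⟩
    have hBvmem : Vert.node (Tag.B i') pB x0 ∈ setB k d S i' := by
      refine ⟨pB, x0, rfl, hj3, hi', ?_, hx0⟩
      intro j
      constructor
      · intro hF
        obtain ⟨a, haS, he⟩ := (hβfill j).1 (Or.inr hF)
        exact ⟨a, haS, by rw [hpBdef]; dsimp only; rw [if_pos hF]; exact he⟩
      · intro hF
        rw [hpBdef]; dsimp only; rw [if_neg hF]
    have hmemk2L : Vert.node (Tag.L (k - 2)) (planP A B (k - 2)) x' ∈ setL k d S (k - 2) :=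
      memVL hAS hBS hxA hxB (k - 2) (by omega) (by omega)
    have hmemk2L' : Vert.node (Tag.L' (k - 2)) (planP A B (k - 2)) x' ∈ setL' k d S (k - 2) :=
      memVL' hAS hBS x' (k - 2) (by omega) (by omega)
    have e1 : CoordE k d S (Vert.node (Tag.L (k - 2)) (planP A B (k - 2)) x')
        (Vert.node (Tag.L' (k - 2)) (planP A B (k - 2)) x') :=
      ⟨Tag.L (k - 2), Tag.L' (k - 2), planP A B (k - 2), x', x', rfl, rfl, by simp,
        Or.inr (Or.inr (Or.inl ⟨k - 2, hmemk2L, hmemk2L'⟩))⟩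
    have hsfx : ∀ j : Fin k, k - i' + 2 ≤ (j : ℕ) → pB j = planP A B (k - 2) j := by
      intro j hj
      have h1 : ¬ (j : ℕ) < k - (k - 2) := by omega
      have h2 : k - (k - 2) + 2 ≤ (j : ℕ) := by omega
      rw [hpBdef]
      dsimp only
      rw [if_pos hj]
      unfold planP
      rw [if_neg h1, if_pos h2]
      exact (hplanB j hj).symm
    have e2 : BBack k d S (Vert.node (Tag.L' (k - 2)) (planP A B (k - 2)) x')
        (Vert.node (Tag.B i') pB x0) :=
      Or.inr (Or.inl ⟨i', planP A B (k - 2), x', pB, x0, hmemk2L', hBvmem, rfl, rfl, hsfx⟩)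
    have hsfx2 : ∀ j : Fin k, k - i' + 2 ≤ (j : ℕ) → pB j = pβ j := by
      intro j hj
      rw [hpBdef]; dsimp only; rw [if_pos hj]
    have e3 : BBack k d S (Vert.node (Tag.B i') pB x0) β := by
      rcases hβd with ⟨hb1, hb2⟩ | ⟨hb1, hb2⟩
      · exact Or.inl ⟨i', Tag.L i', pB, x0, pβ, xβ, hBvmem, Or.inl hb2, rfl, hb1, hsfx2⟩
      · exact Or.inl ⟨i', Tag.L' i', pB, x0, pβ, xβ, hBvmem, Or.inr hb2, rfl, hb1, hsfx2⟩
    exact hwl_cons (adj_coord e1) (hwl_cons (adj_bback e2) (hwl_single (adj_bback e3)))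
  -- the tail of the walk in case `i' = k-1` (via a vector-change of `a_1` at the top)
  have tailTop : i' = k - 1 →
      DistLE (Adj k d S) (Vert.node (Tag.L (k - 1)) (planP A B (k - 1)) x') β 2 := by
    intro hi'
    subst hi'
    have hPk : ∀ j : Fin k, (j : ℕ) ≠ 0 → pβ j = planP A B (k - 1) j := by
      intro j hj
      have h1 : ¬ (j : ℕ) < k - (k - 1) := by omega
      by_cases h2 : k - (k - 1) + 2 ≤ (j : ℕ)
      · unfold planP
        rw [if_neg h1, if_pos h2]
        exact (hplanB j (by omega)).symm
      · unfold planP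
        rw [if_neg h1, if_neg h2]
        exact hβfill.none (by omega)
    have hmemT : Vert.node (Tag.L (k - 1)) (planP A B (k - 1)) x' ∈ setL k d S (k - 1) :=
      memVL hAS hBS hxA hxB (k - 1) (by omega) (by omega)
    have hmemT' : Vert.node (Tag.L' (k - 1)) pβ x' ∈ setL' k d S (k - 1) :=
      ⟨pβ, x', rfl, by omega, le_rfl, hβfill⟩
    have evec : VecE k d S (Vert.node (Tag.L (k - 1)) (planP A B (k - 1)) x')
        (Vert.node (Tag.L' (k - 1)) pβ x') :=
      ⟨k - 1, planP A B (k - 1), x', pβ, x', by omega, le_rfl, rfl, rfl, hmemT, hmemT', rfl,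
        Or.inl (fun j hj => hPk j (by omega))⟩
    rcases hβd with ⟨hb1, hb2⟩ | ⟨hb1, hb2⟩
    · have efin : CoordE k d S (Vert.node (Tag.L' (k - 1)) pβ x') β :=
        ⟨Tag.L' (k - 1), Tag.L (k - 1), pβ, x', xβ, rfl, hb1, by rw [hb1]; simp,
          Or.inr (Or.inl ⟨k - 1, hmemT', hb2⟩)⟩
      exact distLE_intro (hwl_cons (adj_vec evec) (hwl_single (adj_coord efin))) le_rfl
    · by_cases hxx : x' = xβ
      · refine distLE_intro (n := 1) ?_ (by omega)
        rw [hb1, ← hxx]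
        exact hwl_single (adj_vec evec)
      · have efin : CoordE k d S (Vert.node (Tag.L' (k - 1)) pβ x') β :=
          ⟨Tag.L' (k - 1), Tag.L' (k - 1), pβ, x', xβ, rfl, hb1, by rw [hb1]; simp [hxx],
            Or.inl ⟨k - 1, hmemT', hb2⟩⟩
        exact distLE_intro (hwl_cons (adj_vec evec) (hwl_single (adj_coord efin))) le_rfl
  -- the head of the walk in case `i = 3`
  have head3 : i = 3 →
      DistLE (Adj k d S) α (Vert.node (Tag.L 3) (planP A B 3) x') 2 := by
    intro h3
    subst h3
    have hP3 : ∀ j : Fin k, (j : ℕ) ≠ k - 1 → planP A B 3 j = pα j := by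
      intro j hj
      by_cases h1 : (j : ℕ) < k - 3
      · unfold planP
        rw [if_pos h1]
        exact hplanA j h1
      · have h2 : ¬ (k - 3 + 2 ≤ (j : ℕ)) := by have := j.isLt; omega
        unfold planP
        rw [if_neg h1, if_neg h2]
        exact (hαfill.none (by omega)).symm
    have hmem3L : Vert.node (Tag.L 3) (planP A B 3) x' ∈ setL k d S 3 :=
      memVL hAS hBS hxA hxB 3 (by omega) (by omega)
    rcases hαd with ⟨hb1, hb2, _⟩ | ⟨hb1, hb2⟩
    · -- α ∈ L_3
      have hmem3L' : Vert.node (Tag.L' 3) (planP A B 3) xα ∈ setL' k d S 3 :=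
        memVL' hAS hBS xα 3 le_rfl (by omega)
      have e1 : VecE k d S α (Vert.node (Tag.L' 3) (planP A B 3) xα) :=
        ⟨3, pα, xα, planP A B 3, xα, le_rfl, by omega, hb1, rfl, hb2, hmem3L', rfl,
          Or.inr (fun j hj => hP3 j (by omega))⟩
      have e2 : CoordE k d S (Vert.node (Tag.L' 3) (planP A B 3) xα)
          (Vert.node (Tag.L 3) (planP A B 3) x') :=
        ⟨Tag.L' 3, Tag.L 3, planP A B 3, xα, x', rfl, rfl, by simp,
          Or.inr (Or.inl ⟨3, hmem3L', hmem3L⟩)⟩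
      exact distLE_intro (hwl_cons (adj_vec e1) (hwl_single (adj_coord e2))) le_rfl
    · -- α ∈ L'_3
      by_cases hxx : xα = x'
      · subst hxx
        have e : VecE k d S (Vert.node (Tag.L 3) (planP A B 3) xα) α :=
          ⟨3, planP A B 3, xα, pα, xα, le_rfl, by omega, rfl, hb1, hmem3L, hb2, rfl,
            Or.inr (fun j hj => (hP3 j (by omega)).symm)⟩
        exact distLE_intro (hwl_single (adj_vec' e)) (by omega)
      · have hαmem' : Vert.node (Tag.L' 3) pα x' ∈ setL' k d S 3 :=
          ⟨pα, x', rfl, le_rfl, by omega, hαfill⟩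
        have e0 : CoordE k d S α (Vert.node (Tag.L' 3) pα x') :=
          ⟨Tag.L' 3, Tag.L' 3, pα, xα, x', hb1, rfl, by rw [hb1]; simp [hxx],
            Or.inl ⟨3, hb2, hαmem'⟩⟩
        have e : VecE k d S (Vert.node (Tag.L 3) (planP A B 3) x')
            (Vert.node (Tag.L' 3) pα x') :=
          ⟨3, planP A B 3, x', pα, x', le_rfl, by omega, rfl, rfl, hmem3L, hαmem', rfl,
            Or.inr (fun j hj => (hP3 j (by omega)).symm)⟩
        exact distLE_intro (hwl_cons (adj_coord e0) (hwl_single (adj_vec' e))) le_rfl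
  -- the head of the walk in case `i ≥ 4`
  have head4 : 4 ≤ i →
      HasWalkLen (Adj k d S) 3 α (Vert.node (Tag.L 4) (planP A B 4) x') := by
    intro hi4
    obtain ⟨pA, hpAdef⟩ : ∃ f : Fin k → Option (Vec d), f = fun j : Fin k =>
      if (j : ℕ) < k - i then pα j else none := ⟨_, rfl⟩
    have hAvmem : Vert.node (Tag.A i) pA x0 ∈ setA k d S i := by
      refine ⟨pA, x0, rfl, hi4, hik, ?_, hx0⟩
      intro j
      constructor
      · intro hF
        obtain ⟨a, haS, he⟩ := (hαfill j).1 (Or.inl hF)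
        exact ⟨a, haS, by rw [hpAdef]; dsimp only; rw [if_pos hF]; exact he⟩
      · intro hF
        rw [hpAdef]; dsimp only; rw [if_neg hF]
    obtain ⟨tα, hαeq, hαmem⟩ :
        ∃ t, α = Vert.node t pα xα ∧ (α ∈ setL k d S i ∨ α ∈ setL' k d S i) := by
      rcases hαd with ⟨h1, h2, _⟩ | ⟨h1, h2⟩
      exacts [⟨Tag.L i, h1, Or.inl h2⟩, ⟨Tag.L' i, h1, Or.inr h2⟩]
    have e1 : ABack k d S α (Vert.node (Tag.A i) pA x0) :=
      Or.inl ⟨i, tα, pα, xα, pA, x0, hαmem, hAvmem, hαeq, rfl,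
        fun j hj => by rw [hpAdef]; dsimp only; rw [if_pos hj]⟩
    have hmem4L' : Vert.node (Tag.L' 4) (planP A B 4) x' ∈ setL' k d S 4 :=
      memVL' hAS hBS x' 4 (by omega) (by omega)
    have e2 : ABack k d S (Vert.node (Tag.A i) pA x0)
        (Vert.node (Tag.L' 4) (planP A B 4) x') := by
      refine Or.inr (Or.inl ⟨i, pA, x0, planP A B 4, x', hAvmem, hmem4L', rfl, rfl, ?_⟩)
      intro j hj
      have h4 : (j : ℕ) < k - 4 := by omega
      unfold planP
      rw [if_pos h4]
      rw [hpAdef]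
      dsimp only
      rw [if_pos hj]
      exact hplanA j hj
    have e3 : CoordE k d S (Vert.node (Tag.L' 4) (planP A B 4) x')
        (Vert.node (Tag.L 4) (planP A B 4) x') :=
      ⟨Tag.L' 4, Tag.L 4, planP A B 4, x', x', rfl, rfl, by simp,
        Or.inr (Or.inl ⟨4, hmem4L', memVL hAS hBS hxA hxB 4 (by omega) (by omega)⟩)⟩
    exact hwl_cons (adj_aback e1) (hwl_cons (adj_aback e2) (hwl_single (adj_coord e3)))
  -- the special case `k = 5`, `i = 4`, `i' = 3`
  have spec5 : k = 5 → 4 ≤ i → i' = 3 → DistLE (Adj k d S) α β 5 := by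
    intro h5 hi4 hi'3
    have hieq : i = 4 := by omega
    subst hi'3
    subst hieq
    subst h5
    -- the main part of the walk, starting from a vertex of `L_4` with tuple `pα`
    have main4 : ∀ (x4 : Fin (5 - 1) → Fin d), BitCond 5 d 4 pα x4 →
        Vert.node (Tag.L 4) pα x4 ∈ setL 5 d S 4 →
        HasWalkLen (Adj 5 d S) 4 (Vert.node (Tag.L 4) pα x4) β := by
      intro x4 hb4 hm4
      obtain ⟨p2, hp2⟩ : ∃ f : Fin 5 → Option (Vec d), f = fun j : Fin 5 =>
          if (j : ℕ) = 1 then some (ones d) else if (j : ℕ) = 3 then none else pα j :=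
        ⟨_, rfl⟩
      have hp2v : ∀ j : Fin 5, (j : ℕ) ≠ 1 → (j : ℕ) ≠ 3 → p2 j = pα j := by
        intro j h1 h3
        rw [hp2]; dsimp only; rw [if_neg h1, if_neg h3]
      have hbit2 : BitCond 5 d 3 p2 x4 := by
        constructor
        · intro j hj w hw ℓ hℓ
          by_cases h1 : (j : ℕ) = 1
          · have hwo : w = ones d := by
              rw [hp2] at hw; dsimp only at hw; rw [if_pos h1] at hw
              exact (Option.some.inj hw).symm
            rw [hwo]; rfl
          · rw [hp2v j h1 (by omega)] at hw
            exact hb4.1 j (by omega) w hw ℓ hℓ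
        · intro j hj w hw ℓ hℓ
          rw [hp2v j (by omega) (by omega)] at hw
          exact hb4.2 j (by omega) w hw ℓ hℓ
      have hfill2 : FillsS 5 d S (fun j => j < 5 - 3 ∨ 5 - 3 + 2 ≤ j) p2 := by
        intro j
        constructor
        · intro hF
          by_cases h1 : (j : ℕ) = 1
          · exact ⟨ones d, hone, by rw [hp2]; dsimp only; rw [if_pos h1]⟩
          · obtain ⟨a, haS, he⟩ :=
              (hαfill j).1 (by omega : (j : ℕ) < 5 - 4 ∨ 5 - 4 + 2 ≤ (j : ℕ))
            exact ⟨a, haS, by rw [hp2v j h1 (by omega)]; exact he⟩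
        · intro hF
          have h2 : (j : ℕ) = 2 ∨ (j : ℕ) = 3 := by have := j.isLt; omega
          rcases h2 with h2 | h2
          · rw [hp2v j (by omega) (by omega)]
            exact hαfill.none (by omega)
          · rw [hp2]; dsimp only; rw [if_neg (by omega), if_pos h2]
      have hmem2 : Vert.node (Tag.L 3) p2 x4 ∈ setL 5 d S 3 :=
        ⟨p2, x4, rfl, Or.inr (Or.inr ⟨by omega, by omega, hfill2, hbit2⟩)⟩
      have e1 : SwapE 5 d S (Vert.node (Tag.L 3) p2 x4) (Vert.node (Tag.L 4) pα x4) :=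
        Or.inl ⟨3, p2, x4, pα, x4, by omega, by omega, rfl, rfl, hmem2, hm4, rfl,
          fun j hj1 hj2 => (hp2v j (by omega) (by omega)).symm⟩
      obtain ⟨p3, hp3⟩ : ∃ f : Fin 5 → Option (Vec d), f = fun j : Fin 5 =>
          if (j : ℕ) = 4 then pβ j else p2 j := ⟨_, rfl⟩
      have hp3v : ∀ j : Fin 5, (j : ℕ) ≠ 4 → p3 j = p2 j := by
        intro j h
        rw [hp3]; dsimp only; rw [if_neg h]
      have hp3t : ∀ j : Fin 5, (j : ℕ) = 4 → p3 j = pβ j := by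
        intro j h
        rw [hp3]; dsimp only; rw [if_pos h]
      have hfill3 : FillsS 5 d S (fun j => j < 5 - 3 ∨ 5 - 3 + 2 ≤ j) p3 := by
        intro j
        constructor
        · intro hF
          by_cases h4 : (j : ℕ) = 4
          · obtain ⟨a, haS, he⟩ :=
              (hβfill j).1 (by omega : (j : ℕ) < 5 - 3 ∨ 5 - 3 + 2 ≤ (j : ℕ))
            exact ⟨a, haS, by rw [hp3t j h4]; exact he⟩
          · obtain ⟨a, haS, he⟩ := (hfill2 j).1 hF
            exact ⟨a, haS, by rw [hp3v j h4]; exact he⟩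
        · intro hF
          rw [hp3v j (by omega)]
          exact (hfill2 j).2 hF
      have hmem3' : Vert.node (Tag.L' 3) p3 x4 ∈ setL' 5 d S 3 :=
        ⟨p3, x4, rfl, le_rfl, by omega, hfill3⟩
      have e2 : VecE 5 d S (Vert.node (Tag.L 3) p2 x4) (Vert.node (Tag.L' 3) p3 x4) :=
        ⟨3, p2, x4, p3, x4, le_rfl, by omega, rfl, rfl, hmem2, hmem3', rfl,
          Or.inr (fun j hj => hp3v j (by omega))⟩
      obtain ⟨pB, hpB⟩ : ∃ f : Fin 5 → Option (Vec d), f = fun j : Fin 5 =>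
          if 4 ≤ (j : ℕ) then pβ j else none := ⟨_, rfl⟩
      have hpBv : ∀ j : Fin 5, 4 ≤ (j : ℕ) → pB j = pβ j := by
        intro j h
        rw [hpB]; dsimp only; rw [if_pos h]
      have hBvmem : Vert.node (Tag.B 3) pB x0 ∈ setB 5 d S 3 := by
        refine ⟨pB, x0, rfl, le_rfl, by omega, ?_, hx0⟩
        intro j
        constructor
        · intro hF
          obtain ⟨a, haS, he⟩ := (hβfill j).1 (Or.inr hF)
          exact ⟨a, haS, by rw [hpBv j (by omega)]; exact he⟩
        · intro hF
          rw [hpB]; dsimp only; rw [if_neg (by omega : ¬ 4 ≤ (j : ℕ))]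
      have e3 : BBack 5 d S (Vert.node (Tag.L' 3) p3 x4) (Vert.node (Tag.B 3) pB x0) := by
        refine Or.inr (Or.inl ⟨3, p3, x4, pB, x0, hmem3', hBvmem, rfl, rfl, ?_⟩)
        intro j hj
        rw [hpBv j (by omega), hp3t j (by omega)]
      have e4 : BBack 5 d S (Vert.node (Tag.B 3) pB x0) β := by
        have hsfx : ∀ j : Fin 5, 5 - 3 + 2 ≤ (j : ℕ) → pB j = pβ j := by
          intro j hj
          exact hpBv j (by omega)
        rcases hβd with ⟨hc1, hc2⟩ | ⟨hc1, hc2⟩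
        · exact Or.inl ⟨3, Tag.L 3, pB, x0, pβ, xβ, hBvmem, Or.inl hc2, rfl, hc1, hsfx⟩
        · exact Or.inl ⟨3, Tag.L' 3, pB, x0, pβ, xβ, hBvmem, Or.inr hc2, rfl, hc1, hsfx⟩
      exact hwl_cons (adj_swap' e1) (hwl_cons (adj_vec e2)
        (hwl_cons (adj_bback e3) (hwl_single (adj_bback e4))))
    rcases hαd with ⟨hc1, hc2, hc3⟩ | ⟨hc1, hc2⟩
    · refine distLE_intro (n := 4) ?_ (by omega)
      rw [hc1]
      exact main4 xα hc3 (hc1 ▸ hc2)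
    · obtain ⟨y, hy⟩ := hno (fun j => (pα j).getD (ones d)) (fun j => hαfill.getD_mem hone j)
      have hbit4 : BitCond 5 d 4 pα (fun _ => y) := by
        constructor
        · intro j hj w hw ℓ hℓ
          have hwo : w = (pα j).getD (ones d) := by rw [hw]; rfl
          rw [hwo]; exact hy j
        · intro j hj w hw ℓ hℓ
          have hwo : w = (pα j).getD (ones d) := by rw [hw]; rfl
          rw [hwo]; exact hy j
      have hm4 : Vert.node (Tag.L 4) pα (fun _ => y) ∈ setL 5 d S 4 :=
        ⟨pα, fun _ => y, rfl, Or.inr (Or.inr ⟨by omega, by omega, hαfill, hbit4⟩)⟩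
      have e0 : CoordE 5 d S α (Vert.node (Tag.L 4) pα (fun _ => y)) :=
        ⟨Tag.L' 4, Tag.L 4, pα, xα, fun _ => y, hc1, rfl, by rw [hc1]; simp,
          Or.inr (Or.inl ⟨4, hc2, hm4⟩)⟩
      exact distLE_intro (hwl_cons (adj_coord e0) (main4 (fun _ => y) hbit4 hm4)) (by omega)
  -- assembly
  rcases Nat.lt_or_ge i' (k - 1) with hc | hc
  · -- `i' ≤ k - 2`
    have wt := tailB (by omega)
    rcases Nat.lt_or_ge i 4 with hi4 | hi4
    · obtain ⟨n1, hn1, w1⟩ := distLE_elim (head3 (by omega))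
      have wc := climb hk hAS hBS hxA hxB (k - 5) 3 (by omega) (by omega)
      rw [show 3 + (k - 5) = k - 2 by omega] at wc
      exact ⟨n1 + ((k - 5) + 3), by omega, hwl_trans w1 (hwl_trans wc wt)⟩
    · rcases Nat.lt_or_ge k 6 with hk6 | hk6
      · obtain ⟨n, hn, w⟩ := distLE_elim (spec5 (by omega) hi4 (by omega))
        exact ⟨n, by omega, w⟩
      · have w1 := head4 hi4
        have wc := climb hk hAS hBS hxA hxB (k - 6) 4 (by omega) (by omega)
        rw [show 4 + (k - 6) = k - 2 by omega] at wc
        exact ⟨3 + ((k - 6) + 3), by omega, hwl_trans w1 (hwl_trans wc wt)⟩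
  · -- `i' = k - 1`
    obtain ⟨n2, hn2, wt⟩ := distLE_elim (tailTop (by omega))
    rcases Nat.lt_or_ge i 4 with hi4 | hi4
    · obtain ⟨n1, hn1, w1⟩ := distLE_elim (head3 (by omega))
      have wc := climb hk hAS hBS hxA hxB (k - 4) 3 (by omega) (by omega)
      rw [show 3 + (k - 4) = k - 1 by omega] at wc
      exact ⟨n1 + ((k - 4) + n2), by omega, hwl_trans w1 (hwl_trans wc wt)⟩
    · have w1 := head4 hi4
      have wc := climb hk hAS hBS hxA hxB (k - 5) 4 (by omega) (by omega)
      rw [show 4 + (k - 5) = k - 1 by omega] at wc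
      exact ⟨3 + ((k - 5) + n2), by omega, hwl_trans w1 (hwl_trans wc wt)⟩

end DiamLB
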